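/- (Lemma A, part (iv).) Suppose the minorization condition holds with constant β ∈ (0,1), i.e. p_i(x, A) ≥ β Π(A) for all i ≥ 1, all x ∈ E and all measurable A. Let h : E → ℝ be a bounded measurable function, μ₀ an initial distribution, and for j > i let P^{j|i} denote the composition p_{i+1} ⋯ p_j. Then there is a constant C (depending only on β and sup|h|) such that for all n ≥ 2, | (1/n²) Σ_{j=2}^n Σ_{i=1}^{j−1} ∫∫ h(x_i) h(x_j) (μ₀ P^i)(dx_i) P^{j|i}(x_i, dx_j) − (1/2) (∫ h dΠ)² | ≤ C/n. -/

import Mathlib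

open MeasureTheory ProbabilityTheory
open scoped ENNReal

/-- `stepsFrom p i j` is the composition `p_{i+1} ⋯ p_j` (equal to the identity kernel
when `j ≤ i`), i.e. the transition kernel `P^{j|i}` from time `i` to time `j`. -/
noncomputable def stepsFrom {E : Type*} [MeasurableSpace E]
    (p : ℕ → Kernel E E) (i : ℕ) : ℕ → Kernel E E
  | 0 => Kernel.id
  | j + 1 => if j + 1 ≤ i then Kernel.id else (p (j + 1)) ∘ₖ stepsFrom p i j

/-- `stepsKernel p i = p₁ p₂ ⋯ pᵢ`, so `μ₀.bind (stepsKernel p i)` is `μ₀ Pⁱ`. -/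
noncomputable abbrev stepsKernel {E : Type*} [MeasurableSpace E]
    (p : ℕ → Kernel E E) : ℕ → Kernel E E := stepsFrom p 0

section Aux
variable {E : Type*} [MeasurableSpace E]

lemma stepsFrom_of_le (p : ℕ → Kernel E E) {i j : ℕ} (hj : j ≤ i) :
    stepsFrom p i j = Kernel.id := by
  cases j with
  | zero => rfl
  | succ j => rw [stepsFrom, if_pos hj]

lemma stepsFrom_succ (p : ℕ → Kernel E E) {i j : ℕ} (hj : i ≤ j) :
    stepsFrom p i (j + 1) = (p (j + 1)) ∘ₖ stepsFrom p i j := by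
  rw [stepsFrom, if_neg (by omega)]

instance stepsFrom_markov (p : ℕ → Kernel E E) [∀ i, IsMarkovKernel (p i)] (i j : ℕ) :
    IsMarkovKernel (stepsFrom p i j) := by
  induction j with
  | zero => exact inferInstanceAs (IsMarkovKernel (Kernel.id : Kernel E E))
  | succ j ih =>
    rw [stepsFrom]
    split
    · infer_instance
    · exact Kernel.IsMarkovKernel.comp _ _

lemma stepsFrom_front (p : ℕ → Kernel E E) [∀ i, IsMarkovKernel (p i)] {i j : ℕ} (hij : i < j) :
    stepsFrom p i j = stepsFrom p (i + 1) j ∘ₖ p (i + 1) := by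
  induction j with
  | zero => omega
  | succ j ih =>
    rcases Nat.lt_or_ge i j with hj | hj
    · rw [stepsFrom_succ p (by omega), ih hj, stepsFrom_succ p (by omega), Kernel.comp_assoc]
    · have : i = j := by omega
      subst this
      rw [stepsFrom_succ p le_rfl, stepsFrom_of_le p le_rfl,
        stepsFrom_of_le p (le_refl (i+1)), Kernel.comp_id, Kernel.id_comp]

end Aux

section Aux2
variable {E : Type*} [MeasurableSpace E]

lemma my_integrable_of_bound (μ : Measure E) [IsFiniteMeasure μ] {f : E → ℝ} {M : ℝ}
    (hf : Measurable f) (hb : ∀ x, |f x| ≤ M) : Integrable f μ :=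
  (integrable_const M).mono' hf.aestronglyMeasurable (ae_of_all _ (by simpa using hb))

lemma my_abs_integral_le (μ : Measure E) [IsProbabilityMeasure μ] {f : E → ℝ} {M : ℝ}
    (hb : ∀ x, |f x| ≤ M) : |∫ x, f x ∂μ| ≤ M := by
  have := norm_integral_le_of_norm_le_const (μ := μ) (f := f) (C := M)
    (ae_of_all _ (by simpa using hb))
  simpa using this

lemma my_abs_integral_sub_le (μ : Measure E) [IsProbabilityMeasure μ] {f : E → ℝ} {c D : ℝ}
    (hf : Measurable f) (hM : ∃ M, ∀ x, |f x| ≤ M) (hb : ∀ x, |f x - c| ≤ D) :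
    |∫ x, f x ∂μ - c| ≤ D := by
  obtain ⟨M, hMb⟩ := hM
  have hint : Integrable f μ := my_integrable_of_bound μ hf hMb
  have : ∫ x, f x ∂μ - c = ∫ x, (f x - c) ∂μ := by
    rw [integral_sub hint (integrable_const c), integral_const]; simp
  rw [this]
  exact my_abs_integral_le μ (f := fun x => f x - c) hb

lemma my_meas_kernel_integral (κ : Kernel E E) [IsSFiniteKernel κ] {f : E → ℝ}
    (hf : Measurable f) : StronglyMeasurable fun x => ∫ y, f y ∂κ x :=
  (hf.stronglyMeasurable.comp_measurable measurable_snd).integral_kernel_prod_right'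
    (κ := κ)

lemma my_isProb_bind (μ : Measure E) [IsProbabilityMeasure μ] (κ : Kernel E E)
    [IsMarkovKernel κ] : IsProbabilityMeasure (μ.bind κ) := by
  constructor
  rw [Measure.bind_apply MeasurableSet.univ (Kernel.measurable κ).aemeasurable]
  simp

lemma my_integral_bind_nonneg (μ : Measure E) [IsProbabilityMeasure μ] (κ : Kernel E E)
    [IsMarkovKernel κ] {f : E → ℝ} {M : ℝ} (hf : Measurable f)
    (hnn : ∀ x, 0 ≤ f x) (hb : ∀ x, f x ≤ M) :
    ∫ y, f y ∂(μ.bind κ) = ∫ x, ∫ y, f y ∂(κ x) ∂μ := by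
  have h1 : ∫ y, f y ∂(μ.bind κ) = (∫⁻ y, ENNReal.ofReal (f y) ∂(μ.bind κ)).toReal :=
    integral_eq_lintegral_of_nonneg_ae (ae_of_all _ hnn) hf.aestronglyMeasurable
  have hfm : Measurable fun y => ENNReal.ofReal (f y) := ENNReal.measurable_ofReal.comp hf
  have h2 : ∫⁻ y, ENNReal.ofReal (f y) ∂(μ.bind κ)
      = ∫⁻ x, ∫⁻ y, ENNReal.ofReal (f y) ∂(κ x) ∂μ :=
    Measure.lintegral_bind (Kernel.measurable κ).aemeasurable hfm.aemeasurable
  have hFm : Measurable fun x => ∫⁻ y, ENNReal.ofReal (f y) ∂(κ x) :=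
    Measurable.lintegral_kernel_prod_right' (κ := κ)
      (f := fun q : E × E => ENNReal.ofReal (f q.2)) (hfm.comp measurable_snd)
  have hFlt : ∀ x, ∫⁻ y, ENNReal.ofReal (f y) ∂(κ x) < ⊤ := by
    intro x
    calc ∫⁻ y, ENNReal.ofReal (f y) ∂(κ x) ≤ ∫⁻ _, ENNReal.ofReal M ∂(κ x) :=
          lintegral_mono fun y => ENNReal.ofReal_le_ofReal (hb y)
      _ = ENNReal.ofReal M := by simp
      _ < ⊤ := ENNReal.ofReal_lt_top
  have h3 : (∫⁻ x, ∫⁻ y, ENNReal.ofReal (f y) ∂(κ x) ∂μ).toReal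
      = ∫ x, (∫⁻ y, ENNReal.ofReal (f y) ∂(κ x)).toReal ∂μ :=
    (integral_toReal hFm.aemeasurable (ae_of_all _ hFlt)).symm
  have h4 : ∀ x, (∫⁻ y, ENNReal.ofReal (f y) ∂(κ x)).toReal = ∫ y, f y ∂(κ x) := fun x =>
    (integral_eq_lintegral_of_nonneg_ae (ae_of_all _ hnn) hf.aestronglyMeasurable).symm
  rw [h1, h2, h3]
  exact integral_congr_ae (ae_of_all _ h4)

lemma my_integral_bind (μ : Measure E) [IsProbabilityMeasure μ] (κ : Kernel E E)
    [IsMarkovKernel κ] {f : E → ℝ} {M : ℝ} (hf : Measurable f) (hb : ∀ x, |f x| ≤ M) :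
    ∫ y, f y ∂(μ.bind κ) = ∫ x, ∫ y, f y ∂(κ x) ∂μ := by
  haveI := my_isProb_bind μ κ
  have hb' : ∀ x, |f x| ≤ |M| := fun x => (hb x).trans (le_abs_self M)
  set g : E → ℝ := fun y => f y + |M| with hg
  have hgm : Measurable g := hf.add_const _
  have hgnn : ∀ x, 0 ≤ g x := fun x => by
    have := abs_le.1 (hb' x); simp only [hg]; linarith [this.1]
  have hgb : ∀ x, g x ≤ 2 * |M| := fun x => by
    have := abs_le.1 (hb' x); simp only [hg]; linarith [this.2]
  have key := my_integral_bind_nonneg μ κ hgm hgnn hgb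
  have hfi : ∀ (ν : Measure E), IsProbabilityMeasure ν → ∫ y, g y ∂ν = ∫ y, f y ∂ν + |M| := by
    intro ν hν
    rw [integral_add (my_integrable_of_bound ν hf hb') (integrable_const _), integral_const]
    simp
  rw [hfi _ inferInstance] at key
  have hGmeas : StronglyMeasurable fun x => ∫ y, f y ∂(κ x) := my_meas_kernel_integral κ hf
  have hGb : ∀ x, |∫ y, f y ∂(κ x)| ≤ |M| := fun x => my_abs_integral_le (κ x) hb'
  have hGint : Integrable (fun x => ∫ y, f y ∂(κ x)) μ :=
    (integrable_const |M|).mono' hGmeas.aestronglyMeasurable (ae_of_all _ (by simpa using hGb))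
  have : ∫ x, ∫ y, g y ∂(κ x) ∂μ = ∫ x, ∫ y, f y ∂(κ x) ∂μ + |M| := by
    have : ∀ x, ∫ y, g y ∂(κ x) = ∫ y, f y ∂(κ x) + |M| := fun x => hfi (κ x) inferInstance
    rw [integral_congr_ae (ae_of_all _ this), integral_add hGint (integrable_const _),
      integral_const]
    simp
  rw [this] at key
  linarith
end Aux2

section Aux3
variable {E : Type*} [MeasurableSpace E]

lemma my_min_step {β : ℝ} (hβ0 : 0 < β) (hβ1 : β < 1) (Pi : Measure E)
    [IsProbabilityMeasure Pi] (k : Kernel E E) [IsMarkovKernel k]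
    (hmin : ∀ x : E, ∀ A : Set E, MeasurableSet A → ENNReal.ofReal β * Pi A ≤ k x A)
    (x : E) {f : E → ℝ} {c D : ℝ} (hfm : Measurable f) (hD : 0 ≤ D)
    (hb : ∀ y, |f y - c| ≤ D) :
    |∫ y, f y ∂(k x) - (β * ∫ y, f y ∂Pi + (1 - β) * c)| ≤ (1 - β) * D := by
  have hle : (ENNReal.ofReal β) • Pi ≤ k x := Measure.le_iff.2 fun s hs => by
    simpa [Measure.smul_apply, smul_eq_mul] using hmin x s hs
  have step : ∀ ψ : E → ℝ, Measurable ψ → (∀ y, 0 ≤ ψ y) → (∀ y, ψ y ≤ 2 * D) →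
      β * ∫ y, ψ y ∂Pi ≤ ∫ y, ψ y ∂(k x) := by
    intro ψ hψm hψ0 hψb
    have hint : Integrable ψ (k x) := my_integrable_of_bound _ hψm
      (fun y => abs_le.2 ⟨by linarith [hψ0 y], hψb y⟩)
    have := integral_mono_measure hle (ae_of_all _ hψ0) hint
    rwa [integral_smul_measure, ENNReal.toReal_ofReal hβ0.le, smul_eq_mul] at this
  have hfb : ∀ y, |f y| ≤ D + |c| := fun y => by
    calc |f y| = |(f y - c) + c| := by ring_nf
      _ ≤ |f y - c| + |c| := abs_add_le _ _
      _ ≤ D + |c| := by linarith [hb y]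
  have hint : ∀ (ν : Measure E), IsProbabilityMeasure ν → Integrable f ν := fun ν hν =>
    my_integrable_of_bound ν hfm hfb
  have e1 : ∀ (ν : Measure E) (_hν : IsProbabilityMeasure ν),
      ∫ y, (f y + (D - c)) ∂ν = ∫ y, f y ∂ν + (D - c) := by
    intro ν hν
    rw [integral_add (hint ν hν) (integrable_const _), integral_const]; simp
  have e2 : ∀ (ν : Measure E) (_hν : IsProbabilityMeasure ν),
      ∫ y, ((c + D) - f y) ∂ν = (c + D) - ∫ y, f y ∂ν := by
    intro ν hν
    rw [integral_sub (integrable_const _) (hint ν hν), integral_const]; simp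
  have s1 := step (fun y => f y + (D - c)) (hfm.add_const _)
    (fun y => by have := abs_le.1 (hb y); linarith [this.1])
    (fun y => by have := abs_le.1 (hb y); linarith [this.2])
  have s2 := step (fun y => (c + D) - f y) (measurable_const.sub hfm)
    (fun y => by have := abs_le.1 (hb y); linarith [this.2])
    (fun y => by have := abs_le.1 (hb y); linarith [this.1])
  rw [e1 _ inferInstance, e1 _ inferInstance] at s1
  rw [e2 _ inferInstance, e2 _ inferInstance] at s2
  rw [abs_le]; constructor <;> nlinarith

lemma my_bind_stepsFrom (Pi : Measure E) [IsProbabilityMeasure Pi] (p : ℕ → Kernel E E)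
    [∀ i, IsMarkovKernel (p i)] (hinv : ∀ k, 1 ≤ k → Pi.bind (p k) = Pi) (i j : ℕ) :
    Pi.bind (stepsFrom p i j) = Pi := by
  induction j with
  | zero =>
    show Pi.bind ⇑(Kernel.id : Kernel E E) = Pi
    have : ⇑(Kernel.id : Kernel E E) = fun a => Measure.dirac a := by
      funext a; exact Kernel.id_apply a
    rw [this]
    exact Measure.bind_dirac
  | succ j ih =>
    by_cases hji : j + 1 ≤ i
    · rw [stepsFrom_of_le p hji]
      have : ⇑(Kernel.id : Kernel E E) = fun a => Measure.dirac a := by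
        funext a; exact Kernel.id_apply a
      rw [this]
      exact Measure.bind_dirac
    · rw [stepsFrom_succ p (by omega)]
      have hc : ⇑(p (j + 1) ∘ₖ stepsFrom p i j)
          = fun a => ((stepsFrom p i j) a).bind (p (j + 1)) := by
        funext a; exact Kernel.comp_apply _ _ a
      rw [hc, ← Measure.bind_bind (Kernel.measurable _).aemeasurable (Kernel.measurable _).aemeasurable, ih,
        hinv (j + 1) (by omega)]

lemma my_osc {β hmax : ℝ} (hβ0 : 0 < β) (hβ1 : β < 1) (hmax0 : 0 ≤ hmax)
    (Pi : Measure E) [IsProbabilityMeasure Pi] (p : ℕ → Kernel E E)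
    [∀ i, IsMarkovKernel (p i)]
    (hinv : ∀ k, 1 ≤ k → Pi.bind (p k) = Pi)
    (hmin : ∀ k, 1 ≤ k → ∀ x : E, ∀ A : Set E, MeasurableSet A →
      ENNReal.ofReal β * Pi A ≤ p k x A)
    {h : E → ℝ} (hm : Measurable h) (hb : ∀ x, |h x| ≤ hmax) :
    ∀ d i x, |∫ y, h y ∂(stepsFrom p i (i + d) x) - ∫ y, h y ∂Pi|
      ≤ 2 * hmax * (1 - β) ^ d := by
  have hmPi : |∫ y, h y ∂Pi| ≤ hmax := my_abs_integral_le Pi hb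
  intro d
  induction d with
  | zero =>
    intro i x
    rw [stepsFrom_of_le p (by omega), Kernel.id_apply, integral_dirac' _ _ hm.stronglyMeasurable]
    rw [pow_zero, mul_one]
    have := abs_le.1 hmPi
    have h2 := abs_le.1 (hb x)
    rw [abs_le]; constructor <;> linarith
  | succ d ih =>
    intro i x
    have hfront := stepsFrom_front p (i := i) (j := i + d + 1) (by omega)
    have harr : i + (d + 1) = (i + 1) + d := by omega
    rw [show i + (d + 1) = i + d + 1 from rfl, hfront, Kernel.comp_apply]
    have heq : i + d + 1 = (i + 1) + d := by omega
    rw [heq]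
    set κ := stepsFrom p (i + 1) ((i + 1) + d) with hκ
    set G : E → ℝ := fun z => ∫ y, h y ∂(κ z) with hG
    have hGsm : StronglyMeasurable G := my_meas_kernel_integral κ hm
    have hGm : Measurable G := hGsm.measurable
    have hGb : ∀ z, |G z| ≤ hmax := fun z => my_abs_integral_le (κ z) hb
    have hbind : ∫ y, h y ∂((p (i + 1) x).bind κ) = ∫ z, G z ∂(p (i + 1) x) :=
      my_integral_bind (p (i + 1) x) κ hm hb
    rw [hbind]
    have hGosc : ∀ z, |G z - ∫ y, h y ∂Pi| ≤ 2 * hmax * (1 - β) ^ d := fun z => ih (i + 1) z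
    have hGPi : ∫ z, G z ∂Pi = ∫ y, h y ∂Pi := by
      rw [hG, ← my_integral_bind Pi κ hm hb, my_bind_stepsFrom Pi p hinv]
    have hD : (0:ℝ) ≤ 2 * hmax * (1 - β) ^ d := mul_nonneg (by linarith) (pow_nonneg (by linarith) d)
    have := my_min_step hβ0 hβ1 Pi (p (i + 1)) (hmin (i + 1) (by omega)) x hGm hD hGosc
    rw [hGPi] at this
    have hcen : β * ∫ y, h y ∂Pi + (1 - β) * ∫ y, h y ∂Pi = ∫ y, h y ∂Pi := by ring
    rw [hcen] at this
    calc |∫ z, G z ∂(p (i + 1) x) - ∫ y, h y ∂Pi|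
        ≤ (1 - β) * (2 * hmax * (1 - β) ^ d) := this
      _ = 2 * hmax * (1 - β) ^ (d + 1) := by ring
end Aux3

lemma my_sum_pow_le {r : ℝ} (h0 : 0 ≤ r) (h1 : r < 1) (s : Finset ℕ) :
    ∑ i ∈ s, r ^ i ≤ (1 - r)⁻¹ :=
  (Summable.sum_le_tsum s (fun i _ => pow_nonneg h0 i) (summable_geometric_of_lt_one h0 h1)).trans_eq
    (tsum_geometric_of_lt_one h0 h1)

lemma my_sum_pow_rev (r : ℝ) {j : ℕ} (hj : 2 ≤ j) :
    ∑ i ∈ Finset.Icc 1 (j - 1), r ^ (j - i) = ∑ i ∈ Finset.Icc 1 (j - 1), r ^ i := by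
  refine Finset.sum_nbij' (fun i => j - i) (fun i => j - i) ?_ ?_ ?_ ?_ ?_ <;>
    intro a ha <;> simp only [Finset.mem_Icc] at * <;> omega

lemma my_count (n : ℕ) (hn : 2 ≤ n) :
    ∑ j ∈ Finset.Icc 2 n, ((j : ℝ) - 1) = (n : ℝ) * ((n : ℝ) - 1) / 2 := by
  induction n with
  | zero => omega
  | succ n ih =>
    rcases Nat.lt_or_ge n 2 with h2 | h2
    · interval_cases n
      · omega
      · norm_num
    · rw [Finset.sum_Icc_succ_top (by omega), ih h2]
      push_cast
      ring


/-- **Lemma A, part (iv).** Under the minorization condition with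
constant `β ∈ (0,1)`, for `h` bounded by `hmax` there is a constant `C` depending
only on `β` and `hmax` such that for all `n ≥ 2`,
`|(1/n²) ∑_{j=2}^n ∑_{i=1}^{j−1} ∫∫ h(xᵢ)h(x_j) (μ₀Pⁱ)(dxᵢ) P^{j|i}(xᵢ,dx_j)
  − (1/2)(∫ h dΠ)²| ≤ C/n`. -/
theorem cross_moment_bound_of_minorization
    (β hmax : ℝ) (hβ0 : 0 < β) (hβ1 : β < 1) (hmax0 : 0 ≤ hmax) :
    ∃ C : ℝ, ∀ (E : Type) [MeasurableSpace E]
      (Pi : Measure E) [IsProbabilityMeasure Pi]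
      (p : ℕ → Kernel E E) [∀ i, IsMarkovKernel (p i)],
      (∀ i ≥ 1, ∀ A : Set E, MeasurableSet A → ∫⁻ x, p i x A ∂Pi = Pi A) →
      (∀ i ≥ 1, ∀ x : E, ∀ A : Set E, MeasurableSet A →
        ENNReal.ofReal β * Pi A ≤ p i x A) →
      ∀ (h : E → ℝ), Measurable h → (∀ x, |h x| ≤ hmax) →
      ∀ (μ₀ : Measure E), IsProbabilityMeasure μ₀ →
      ∀ n : ℕ, 2 ≤ n →
        |(1 / (n : ℝ) ^ 2) * (∑ j ∈ Finset.Icc 2 n, ∑ i ∈ Finset.Icc 1 (j - 1),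
            ∫ x, h x * ∫ y, h y ∂(stepsFrom p i j x)
              ∂(μ₀.bind (fun x₀ => stepsKernel p i x₀)))
          - (1 / 2) * (∫ x, h x ∂Pi) ^ 2| ≤ C / n := by
  refine ⟨4 * hmax ^ 2 / β + hmax ^ 2 / 2, ?_⟩
  intro E _ Pi _ p _ hinvL hminL h hm hb μ₀ hμ₀ n hn
  haveI := hμ₀
  have hinv : ∀ k, 1 ≤ k → Pi.bind (p k) = Pi := by
    intro k hk
    ext s hs
    rw [Measure.bind_apply hs (Kernel.measurable _).aemeasurable]
    exact hinvL k hk s hs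
  have hmin : ∀ k, 1 ≤ k → ∀ x : E, ∀ A : Set E, MeasurableSet A →
      ENNReal.ofReal β * Pi A ≤ p k x A := fun k hk => hminL k hk
  set m : ℝ := ∫ x, h x ∂Pi with hmdef
  have hmabs : |m| ≤ hmax := my_abs_integral_le Pi hb
  set r : ℝ := 1 - β with hrdef
  have hr0 : 0 ≤ r := by simp [hrdef]; linarith
  have hr1 : r < 1 := by simp [hrdef]; linarith
  have hosc := my_osc hβ0 hβ1 hmax0 Pi p hinv hmin hm hb
  have hoscle : ∀ i j : ℕ, i ≤ j → ∀ x,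
      |∫ y, h y ∂(stepsFrom p i j x) - m| ≤ 2 * hmax * r ^ (j - i) := by
    intro i j hij x
    have := hosc (j - i) i x
    rwa [Nat.add_sub_cancel' hij] at this
  -- term bound
  have hterm : ∀ j ∈ Finset.Icc 2 n, ∀ i ∈ Finset.Icc 1 (j - 1),
      |(∫ x, h x * ∫ y, h y ∂(stepsFrom p i j x)
          ∂(μ₀.bind (fun x₀ => stepsKernel p i x₀))) - m ^ 2|
        ≤ 2 * hmax ^ 2 * (r ^ (j - i) + r ^ i) := by
    intro j hj i hi
    simp only [Finset.mem_Icc] at hj hi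
    have hij : i ≤ j := by omega
    have hμb : μ₀.bind (fun x₀ => stepsKernel p i x₀) = μ₀.bind ⇑(stepsFrom p 0 i) := rfl
    rw [hμb]
    set μi := μ₀.bind ⇑(stepsFrom p 0 i) with hμi
    haveI : IsProbabilityMeasure μi := my_isProb_bind μ₀ _
    set g : E → ℝ := fun x => ∫ y, h y ∂(stepsFrom p i j x) with hgdef
    have hgm : Measurable g := (my_meas_kernel_integral _ hm).measurable
    have hgb : ∀ x, |g x| ≤ hmax := fun x => my_abs_integral_le _ hb
    have hgo : ∀ x, |g x - m| ≤ 2 * hmax * r ^ (j - i) := fun x => hoscle i j hij x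
    have hDij : (0:ℝ) ≤ 2 * hmax * r ^ (j - i) := mul_nonneg (by linarith) (pow_nonneg hr0 _)
    -- estimate of ∫ h ∂μi
    have hμest : |∫ x, h x ∂μi - m| ≤ 2 * hmax * r ^ i := by
      rw [hμi, my_integral_bind μ₀ (stepsFrom p 0 i) hm hb]
      refine my_abs_integral_sub_le μ₀ (my_meas_kernel_integral _ hm).measurable
        ⟨hmax, fun x => my_abs_integral_le _ hb⟩ fun x => ?_
      have := hoscle 0 i (Nat.zero_le i) x
      rwa [Nat.sub_zero] at this
    -- expansion
    have hint1 : Integrable (fun x => h x * (g x - m)) μi :=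
      my_integrable_of_bound μi (hm.mul (hgm.sub measurable_const))
        (M := hmax * (2 * hmax * r ^ (j - i))) fun x => by
          rw [abs_mul]
          exact mul_le_mul (hb x) (hgo x) (abs_nonneg _) hmax0
    have hint2 : Integrable (fun x => m * h x) μi :=
      my_integrable_of_bound μi (measurable_const.mul hm) (M := hmax * hmax) fun x => by
        rw [abs_mul]
        exact mul_le_mul hmabs (hb x) (abs_nonneg _) hmax0
    have hexp : ∫ x, h x * g x ∂μi
        = ∫ x, h x * (g x - m) ∂μi + m * ∫ x, h x ∂μi := by
      rw [← integral_const_mul, ← integral_add hint1 hint2]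
      congr 1
      funext x
      ring
    have e1 : |∫ x, h x * (g x - m) ∂μi| ≤ hmax * (2 * hmax * r ^ (j - i)) :=
      my_abs_integral_le μi fun x => by
        rw [abs_mul]
        exact mul_le_mul (hb x) (hgo x) (abs_nonneg _) hmax0
    have e2 : |m * ∫ x, h x ∂μi - m ^ 2| ≤ hmax * (2 * hmax * r ^ i) := by
      have : m * ∫ x, h x ∂μi - m ^ 2 = m * (∫ x, h x ∂μi - m) := by ring
      rw [this, abs_mul]
      exact mul_le_mul hmabs hμest (abs_nonneg _) hmax0
    calc |(∫ x, h x * g x ∂μi) - m ^ 2|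
        = |(∫ x, h x * (g x - m) ∂μi) + (m * ∫ x, h x ∂μi - m ^ 2)| := by
          rw [hexp]; congr 1; ring
      _ ≤ |∫ x, h x * (g x - m) ∂μi| + |m * ∫ x, h x ∂μi - m ^ 2| := abs_add_le _ _
      _ ≤ hmax * (2 * hmax * r ^ (j - i)) + hmax * (2 * hmax * r ^ i) := add_le_add e1 e2
      _ = 2 * hmax ^ 2 * (r ^ (j - i) + r ^ i) := by ring
  -- sum estimates
  set S : ℝ := ∑ j ∈ Finset.Icc 2 n, ∑ i ∈ Finset.Icc 1 (j - 1),
      ∫ x, h x * ∫ y, h y ∂(stepsFrom p i j x)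
        ∂(μ₀.bind (fun x₀ => stepsKernel p i x₀)) with hSdef
  have hNcount : ∑ j ∈ Finset.Icc 2 n, ∑ i ∈ Finset.Icc 1 (j - 1), m ^ 2
      = ((n : ℝ) * ((n : ℝ) - 1) / 2) * m ^ 2 := by
    have : ∀ j ∈ Finset.Icc 2 n, ∑ i ∈ Finset.Icc 1 (j - 1), m ^ 2 = ((j : ℝ) - 1) * m ^ 2 := by
      intro j hj
      simp only [Finset.mem_Icc] at hj
      rw [Finset.sum_const, Nat.card_Icc]
      have : (j - 1 + 1 - 1 : ℕ) = j - 1 := by omega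
      rw [this, nsmul_eq_mul, Nat.cast_sub (by omega), Nat.cast_one]
    rw [Finset.sum_congr rfl this, ← Finset.sum_mul, my_count n hn]
  have hinner : ∀ j ∈ Finset.Icc 2 n,
      ∑ i ∈ Finset.Icc 1 (j - 1), 2 * hmax ^ 2 * (r ^ (j - i) + r ^ i)
        ≤ 4 * hmax ^ 2 / β := by
    intro j hj
    simp only [Finset.mem_Icc] at hj
    have hβinv : (1 - r)⁻¹ = β⁻¹ := by rw [hrdef]; ring_nf
    have b1 : ∑ i ∈ Finset.Icc 1 (j - 1), r ^ (j - i) ≤ β⁻¹ := by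
      rw [my_sum_pow_rev r hj.1, ← hβinv]
      exact my_sum_pow_le hr0 hr1 _
    have b2 : ∑ i ∈ Finset.Icc 1 (j - 1), r ^ i ≤ β⁻¹ := by
      rw [← hβinv]; exact my_sum_pow_le hr0 hr1 _
    calc ∑ i ∈ Finset.Icc 1 (j - 1), 2 * hmax ^ 2 * (r ^ (j - i) + r ^ i)
        = 2 * hmax ^ 2 * ((∑ i ∈ Finset.Icc 1 (j - 1), r ^ (j - i))
            + ∑ i ∈ Finset.Icc 1 (j - 1), r ^ i) := by
          rw [← Finset.sum_add_distrib, Finset.mul_sum]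
      _ ≤ 2 * hmax ^ 2 * (β⁻¹ + β⁻¹) := by
          have h2 : (0:ℝ) ≤ 2 * hmax ^ 2 := by positivity
          exact mul_le_mul_of_nonneg_left (add_le_add b1 b2) h2
      _ = 4 * hmax ^ 2 / β := by field_simp; ring
  have hScard : ((Finset.Icc 2 n).card : ℝ) ≤ (n : ℝ) := by
    rw [Nat.card_Icc]
    have : (n + 1 - 2 : ℕ) ≤ n := by omega
    exact_mod_cast this
  have hS : |S - ((n : ℝ) * ((n : ℝ) - 1) / 2) * m ^ 2| ≤ (n : ℝ) * (4 * hmax ^ 2 / β) := by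
    rw [← hNcount, ← Finset.sum_sub_distrib]
    calc |∑ j ∈ Finset.Icc 2 n, (∑ i ∈ Finset.Icc 1 (j - 1),
            (∫ x, h x * ∫ y, h y ∂(stepsFrom p i j x)
              ∂(μ₀.bind (fun x₀ => stepsKernel p i x₀)))
          - ∑ i ∈ Finset.Icc 1 (j - 1), m ^ 2)|
        ≤ ∑ j ∈ Finset.Icc 2 n, |∑ i ∈ Finset.Icc 1 (j - 1),
            (∫ x, h x * ∫ y, h y ∂(stepsFrom p i j x)
              ∂(μ₀.bind (fun x₀ => stepsKernel p i x₀)))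
          - ∑ i ∈ Finset.Icc 1 (j - 1), m ^ 2| := Finset.abs_sum_le_sum_abs _ _
      _ ≤ ∑ j ∈ Finset.Icc 2 n, (4 * hmax ^ 2 / β) := by
          refine Finset.sum_le_sum fun j hj => ?_
          rw [← Finset.sum_sub_distrib]
          refine le_trans (Finset.abs_sum_le_sum_abs _ _) (le_trans
            (Finset.sum_le_sum fun i hi => hterm j hj i hi) (hinner j hj))
      _ = ((Finset.Icc 2 n).card : ℝ) * (4 * hmax ^ 2 / β) := by
          rw [Finset.sum_const, nsmul_eq_mul]
      _ ≤ (n : ℝ) * (4 * hmax ^ 2 / β) := by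
          have hc : (0:ℝ) ≤ 4 * hmax ^ 2 / β := by positivity
          exact mul_le_mul_of_nonneg_right hScard hc
  -- final assembly
  have hn2 : (2:ℝ) ≤ (n:ℝ) := by exact_mod_cast hn
  have hnpos : (0:ℝ) < (n:ℝ) := by linarith
  have hsplit : (1 / (n : ℝ) ^ 2) * S - (1 / 2) * m ^ 2
      = (1 / (n : ℝ) ^ 2) * (S - ((n : ℝ) * ((n : ℝ) - 1) / 2) * m ^ 2)
        - m ^ 2 / (2 * (n : ℝ)) := by
    field_simp
    ring
  rw [hsplit]
  have tri : ∀ a b : ℝ, |a - b| ≤ |a| + |b| := fun a b => by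
    rw [sub_eq_add_neg]
    exact (abs_add_le a (-b)).trans_eq (by rw [abs_neg])
  have hm2 : m ^ 2 ≤ hmax ^ 2 := by
    have := sq_abs m
    nlinarith [hmabs, abs_nonneg m]
  calc |(1 / (n : ℝ) ^ 2) * (S - ((n : ℝ) * ((n : ℝ) - 1) / 2) * m ^ 2)
        - m ^ 2 / (2 * (n : ℝ))|
      ≤ |(1 / (n : ℝ) ^ 2) * (S - ((n : ℝ) * ((n : ℝ) - 1) / 2) * m ^ 2)|
        + |m ^ 2 / (2 * (n : ℝ))| := tri _ _
    _ ≤ (1 / (n : ℝ) ^ 2) * ((n : ℝ) * (4 * hmax ^ 2 / β)) + hmax ^ 2 / (2 * (n : ℝ)) := by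
        refine add_le_add ?_ ?_
        · rw [abs_mul, abs_of_nonneg (by positivity : (0:ℝ) ≤ 1 / (n : ℝ) ^ 2)]
          exact mul_le_mul_of_nonneg_left hS (by positivity)
        · rw [abs_of_nonneg (by positivity : (0:ℝ) ≤ m ^ 2 / (2 * (n : ℝ)))]
          gcongr
    _ = (4 * hmax ^ 2 / β + hmax ^ 2 / 2) / n := by
        field_simp
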